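/- arXiv:0710.5209 — 3 statements merged into one kernel-verified Lean document; each statement's English description precedes it below -/
import Mathlib

section
/- Let N ≥ 3 be an integer and let r, s be positive integers with r + s ≤ N - 1. Then the integral over the unit interval satisfies ∫₀¹ t^{r-1} (1 - t^N)^{s/N - 1} dt = Γ(r/N) Γ(s/N) / (N · Γ((r+s)/N)), i.e. the integral equals B(r/N, s/N)/N where B is the Beta function. -/
open MeasureTheory Real

lemma real_beta_integral (a b : ℝ) (ha : 0 < a) (hb : 0 < b) :
    ∫ x in (0:ℝ)..1, x ^ (a - 1) * (1 - x) ^ (b - 1) =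
      Real.Gamma a * Real.Gamma b / Real.Gamma (a + b) := by
  have key := Complex.Gamma_mul_Gamma_eq_betaIntegral (s := (a : ℂ)) (t := (b : ℂ))
    (by simpa using ha) (by simpa using hb)
  have hbeta : Complex.betaIntegral a b =
      ((∫ x in (0:ℝ)..1, x ^ (a - 1) * (1 - x) ^ (b - 1) : ℝ) : ℂ) := by
    rw [Complex.betaIntegral, ← intervalIntegral.integral_ofReal]
    refine intervalIntegral.integral_congr fun x hx => ?_
    rw [Set.uIcc_of_le (by norm_num : (0:ℝ) ≤ 1)] at hx
    rw [Complex.ofReal_mul, Complex.ofReal_cpow hx.1,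
      Complex.ofReal_cpow (by linarith [hx.2] : (0:ℝ) ≤ 1 - x)]
    push_cast
    ring
  rw [hbeta, ← Complex.ofReal_add, Complex.Gamma_ofReal, Complex.Gamma_ofReal,
    Complex.Gamma_ofReal, ← Complex.ofReal_mul, ← Complex.ofReal_mul] at key
  have key' : Real.Gamma a * Real.Gamma b =
      Real.Gamma (a + b) * ∫ x in (0:ℝ)..1, x ^ (a - 1) * (1 - x) ^ (b - 1) :=
    Complex.ofReal_injective key
  have hG : Real.Gamma (a + b) ≠ 0 := (Real.Gamma_pos_of_pos (by linarith)).ne'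
  field_simp
  linarith [key']

/-- The period integral of the 1-form `ω'_{r,s} = x^{r-1} y^{s-1} dx / y^{N-1}` on the
Fermat curve along `γ₀` equals `B(r/N, s/N)/N`. -/
theorem fermat_period_integral (N r s : ℕ) (hN : 3 ≤ N) (hr : 0 < r) (hs : 0 < s)
    (hrs : r + s ≤ N - 1) :
    ∫ t in (0:ℝ)..1, (t : ℝ) ^ (r - 1) * (1 - t ^ N) ^ ((s : ℝ) / N - 1) =
      Real.Gamma ((r : ℝ) / N) * Real.Gamma ((s : ℝ) / N) /
        (N * Real.Gamma (((r : ℝ) + s) / N)) := by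
  have hN0 : (0:ℝ) < N := by positivity
  have hrN : r < N := by omega
  set a : ℝ := (r : ℝ) / N with ha_def
  set b : ℝ := (s : ℝ) / N with hb_def
  have ha : 0 < a := by positivity
  have hb : 0 < b := by positivity
  -- change of variables u = t ^ N
  have himg : (fun t : ℝ => t ^ N) '' Set.Ioo 0 1 = Set.Ioo 0 1 := by
    ext u
    constructor
    · rintro ⟨t, ⟨ht0, ht1⟩, rfl⟩
      exact ⟨pow_pos ht0 N, pow_lt_one₀ ht0.le ht1 (by omega)⟩
    · rintro ⟨hu0, hu1⟩
      refine ⟨u ^ ((1:ℝ)/N), ⟨Real.rpow_pos_of_pos hu0 _, ?_⟩, ?_⟩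
      · exact Real.rpow_lt_one hu0.le hu1 (by positivity)
      · show (u ^ ((1:ℝ)/N)) ^ N = u
        rw [← Real.rpow_natCast (u ^ ((1:ℝ)/N)) N, ← Real.rpow_mul hu0.le]
        rw [one_div_mul_cancel hN0.ne', Real.rpow_one]
  have hderiv : ∀ t ∈ Set.Ioo (0:ℝ) 1, HasDerivWithinAt (fun t : ℝ => t ^ N)
      ((N : ℝ) * t ^ (N - 1)) (Set.Ioo 0 1) t := fun t _ =>
    (hasDerivAt_pow N t).hasDerivWithinAt
  have hinj : Set.InjOn (fun t : ℝ => t ^ N) (Set.Ioo 0 1) :=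
    (pow_left_strictMonoOn₀ (M₀ := ℝ) (n := N) (by omega)).injOn.mono
      (fun x hx => le_of_lt hx.1)
  have hsub := MeasureTheory.integral_image_eq_integral_abs_deriv_smul
    measurableSet_Ioo hderiv hinj
    (fun u : ℝ => u ^ (a - 1) * (1 - u) ^ (b - 1))
  rw [himg] at hsub
  -- rewrite the substituted integrand
  have hcong : ∀ t ∈ Set.Ioo (0:ℝ) 1,
      |(N : ℝ) * t ^ (N - 1)| • ((t ^ N : ℝ) ^ (a - 1) * (1 - t ^ N) ^ (b - 1)) =
      (N : ℝ) * (t ^ (r - 1) * (1 - t ^ N) ^ (b - 1)) := by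
    intro t ht
    have ht0 : 0 < t := ht.1
    have habs : |(N : ℝ) * t ^ (N - 1)| = (N : ℝ) * t ^ (N - 1) := by
      rw [abs_of_nonneg]; positivity
    have hpow : (t ^ N : ℝ) ^ (a - 1) = t ^ ((r : ℝ) - N) := by
      rw [← Real.rpow_natCast t N, ← Real.rpow_mul ht0.le]
      congr 1
      rw [ha_def]
      field_simp
    have hcombine : (t ^ (N - 1) : ℝ) * t ^ ((r : ℝ) - N) = t ^ (r - 1) := by
      rw [← Real.rpow_natCast t (N - 1), ← Real.rpow_natCast t (r - 1),
        ← Real.rpow_add ht0]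
      congr 1
      have h1 : ((N - 1 : ℕ) : ℝ) = (N : ℝ) - 1 := by
        push_cast [Nat.cast_sub (by omega : 1 ≤ N)]; ring
      have h2 : ((r - 1 : ℕ) : ℝ) = (r : ℝ) - 1 := by
        push_cast [Nat.cast_sub (by omega : 1 ≤ r)]; ring
      rw [h1, h2]; ring
    rw [smul_eq_mul, habs, hpow]
    calc (N : ℝ) * t ^ (N - 1) * (t ^ ((r : ℝ) - N) * (1 - t ^ N) ^ (b - 1))
        = (N : ℝ) * ((t ^ (N - 1) * t ^ ((r : ℝ) - N)) * (1 - t ^ N) ^ (b - 1)) := by ring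
      _ = (N : ℝ) * (t ^ (r - 1) * (1 - t ^ N) ^ (b - 1)) := by rw [hcombine]
  rw [MeasureTheory.setIntegral_congr_fun measurableSet_Ioo hcong,
    MeasureTheory.integral_const_mul] at hsub
  -- assemble
  have hbeta := real_beta_integral a b ha hb
  rw [intervalIntegral.integral_of_le (by norm_num : (0:ℝ) ≤ 1),
    MeasureTheory.integral_Ioc_eq_integral_Ioo] at hbeta
  rw [intervalIntegral.integral_of_le (by norm_num : (0:ℝ) ≤ 1),
    MeasureTheory.integral_Ioc_eq_integral_Ioo]
  have hab : a + b = ((r : ℝ) + s) / N := by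
    rw [ha_def, hb_def]; ring
  rw [hsub, hab] at hbeta
  have hG : Real.Gamma (((r : ℝ) + s) / N) ≠ 0 := by
    refine (Real.Gamma_pos_of_pos ?_).ne'
    positivity
  field_simp at hbeta ⊢
  linarith [hbeta]
end

section
/- Let a ∈ (0, ∞) and b ∈ (0, 1) be real numbers, and let v ∈ (0, 1]. Then ∫₀^v u^{a-1} (1-u)^{b-1} du = Σ_{n=0}^∞ [(1-b, n) / (1, n)] · v^{a+n} / (a+n), where the series on the right converges. -/
open MeasureTheory Real Polynomial Set

open scoped Nat

noncomputable def bc (b : ℝ) (n : ℕ) : ℝ := (ascPochhammer ℝ n).eval (1 - b) / n !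

section aux

variable {b : ℝ}


lemma bc_zero : bc b 0 = 1 := by simp [bc]

lemma ev_nonneg (hb1 : b < 1) (n : ℕ) : 0 ≤ (ascPochhammer ℝ n).eval (1 - b) := by
  induction n with
  | zero => simp
  | succ n ih =>
      rw [ascPochhammer_succ_eval]
      have : (0:ℝ) ≤ 1 - b + n := by
        have : (0:ℝ) ≤ (n:ℝ) := n.cast_nonneg
        linarith
      positivity

lemma ev_le (hb0 : 0 < b) (hb1 : b < 1) (n : ℕ) : (ascPochhammer ℝ n).eval (1 - b) ≤ n ! := by
  induction n with
  | zero => simp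
  | succ n ih =>
      rw [ascPochhammer_succ_eval, Nat.factorial_succ]
      push_cast
      have h1 : (1:ℝ) - b + n ≤ n + 1 := by linarith
      have h2 : (0:ℝ) ≤ 1 - b + n := by
        have : (0:ℝ) ≤ (n:ℝ) := n.cast_nonneg
        linarith
      calc (ascPochhammer ℝ n).eval (1 - b) * (1 - b + n)
          ≤ (n ! : ℝ) * (n + 1) := by
            apply mul_le_mul ih h1 h2 (by positivity)
        _ = (n + 1) * n ! := by ring

lemma bc_nonneg (hb1 : b < 1) (n : ℕ) : 0 ≤ bc b n :=
  div_nonneg (ev_nonneg hb1 n) (by positivity)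

lemma bc_le_one (hb0 : 0 < b) (hb1 : b < 1) (n : ℕ) : bc b n ≤ 1 := by
  rw [bc, div_le_one (by positivity : (0:ℝ) < (n ! : ℝ))]
  exact ev_le hb0 hb1 n

lemma bc_rec (n : ℕ) : bc b (n + 1) * (n + 1) = bc b n * (1 - b + n) := by
  have h0 : ((n:ℝ) + 1) ≠ 0 := by positivity
  have hf : ((n ! : ℝ)) ≠ 0 := by positivity
  rw [bc, bc, ascPochhammer_succ_eval, Nat.factorial_succ]
  push_cast
  field_simp

end aux

section series
variable {b : ℝ} (hb0 : 0 < b) (hb1 : b < 1)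


-- summability of the series itself
include hb0 hb1 in
lemma sumG {y : ℝ} (hy : |y| < 1) : Summable (fun n => bc b n * y ^ n) := by
  apply Summable.of_norm_bounded (summable_geometric_of_lt_one (abs_nonneg y) hy)
  intro n
  rw [norm_mul, norm_pow]
  calc ‖bc b n‖ * |y| ^ n ≤ 1 * |y| ^ n := by
        apply mul_le_mul_of_nonneg_right _ (by positivity)
        rw [Real.norm_eq_abs, abs_of_nonneg (bc_nonneg hb1 n)]
        exact bc_le_one hb0 hb1 n
    _ = |y| ^ n := one_mul _

-- summability of derivative-type series
lemma sumaux {r : ℝ} (h0 : 0 ≤ r) (hr : r < 1) : Summable (fun n : ℕ => (n : ℝ) * r ^ (n - 1)) := by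
  rw [← summable_nat_add_iff 1]
  have h1 : Summable (fun n : ℕ => (n : ℝ) * r ^ n) := by
    simpa using summable_pow_mul_geometric_of_norm_lt_one 1 (r := r)
      (by rwa [Real.norm_eq_abs, abs_of_nonneg h0])
  have h2 : Summable (fun n : ℕ => r ^ n) := summable_geometric_of_lt_one h0 hr
  refine (h1.add h2).congr fun n => ?_
  push_cast
  ring_nf

include hb0 hb1 in
lemma sumD {y : ℝ} (hy : |y| < 1) : Summable (fun n : ℕ => bc b n * ((n : ℝ) * y ^ (n - 1))) := by
  apply Summable.of_norm_bounded (sumaux (abs_nonneg y) hy)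
  intro n
  rw [norm_mul, norm_mul, norm_pow]
  have h1 : ‖bc b n‖ ≤ 1 := by
    rw [Real.norm_eq_abs, abs_of_nonneg (bc_nonneg hb1 n)]; exact bc_le_one hb0 hb1 n
  calc ‖bc b n‖ * (‖(n:ℝ)‖ * |y| ^ (n-1)) ≤ 1 * (‖(n:ℝ)‖ * |y| ^ (n-1)) := by
        apply mul_le_mul_of_nonneg_right h1 (by positivity)
    _ = (n : ℝ) * |y| ^ (n-1) := by rw [one_mul, Real.norm_natCast]

-- the key algebraic identity for the tsums
include hb0 hb1 in
lemma key {y : ℝ} (hy : |y| < 1) :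
    (1 - y) * ∑' n : ℕ, bc b n * ((n : ℝ) * y ^ (n - 1))
      = (1 - b) * ∑' n : ℕ, bc b n * y ^ n := by
  have hD := sumD hb0 hb1 hy
  have hG := sumG hb0 hb1 hy
  -- shifted sums
  have hshift : Summable (fun n : ℕ => bc b (n+1) * (((n:ℝ)+1) * y ^ n)) := by
    have := (summable_nat_add_iff 1).mpr hD
    refine this.congr fun n => ?_
    push_cast
    simp
  have hny : Summable (fun n : ℕ => bc b n * ((n : ℝ) * y ^ n)) := by
    have hs : Summable (fun n : ℕ => (n : ℝ) ^ 1 * |y| ^ n) :=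
      summable_pow_mul_geometric_of_norm_lt_one 1 (by rwa [Real.norm_eq_abs, abs_abs])
    apply Summable.of_norm_bounded hs
    intro n
    rw [norm_mul, norm_mul, norm_pow, pow_one, Real.norm_natCast, Real.norm_eq_abs,
      Real.norm_eq_abs, abs_of_nonneg (bc_nonneg hb1 n)]
    calc bc b n * ((n : ℝ) * |y| ^ n) ≤ 1 * ((n : ℝ) * |y| ^ n) :=
          mul_le_mul_of_nonneg_right (bc_le_one hb0 hb1 n) (by positivity)
      _ = (n : ℝ) * |y| ^ n := one_mul _
  have e1 : ∑' n : ℕ, bc b n * ((n : ℝ) * y ^ (n - 1))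
      = ∑' n : ℕ, bc b (n+1) * (((n:ℝ)+1) * y ^ n) := by
    rw [Summable.tsum_eq_zero_add hD]
    simp
  have e2 : y * ∑' n : ℕ, bc b n * ((n : ℝ) * y ^ (n - 1))
      = ∑' n : ℕ, bc b n * ((n : ℝ) * y ^ n) := by
    rw [← tsum_mul_left]
    apply tsum_congr
    intro n
    rcases n with _ | m
    · simp
    · simp only [Nat.add_sub_cancel, _root_.pow_succ']
      push_cast
      ring
  rw [sub_mul, one_mul, e2, e1, ← Summable.tsum_sub hshift hny, ← tsum_mul_left]
  apply tsum_congr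
  intro n
  have := bc_rec (b := b) n
  linear_combination y ^ n * this

end series

section bin
variable {b : ℝ} (hb0 : 0 < b) (hb1 : b < 1)

include hb0 hb1 in
lemma hasSum_binom {u : ℝ} (h0 : 0 ≤ u) (h1 : u < 1) :
    HasSum (fun n : ℕ => bc b n * u ^ n) ((1 - u) ^ (b - 1)) := by
  set r : ℝ := (1 + u) / 2 with hr
  have hr0 : 0 < r := by rw [hr]; linarith
  have hr1 : r < 1 := by rw [hr]; linarith
  have hur : u < r := by rw [hr]; linarith
  set t : Set ℝ := Set.Ioo (-r) r with ht
  have habs : ∀ y ∈ t, |y| < 1 := fun y hy => lt_trans (abs_lt.mpr ⟨hy.1, hy.2⟩) hr1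
  -- derivative of the sum
  have hder : ∀ y ∈ t, HasDerivAt (fun z => ∑' n : ℕ, bc b n * z ^ n)
      (∑' n : ℕ, bc b n * ((n : ℝ) * y ^ (n - 1))) y := by
    intro y hy
    refine hasDerivAt_tsum_of_isPreconnected (sumaux (le_of_lt hr0) hr1)
      isOpen_Ioo (convex_Ioo _ _).isPreconnected
      (g := fun n z => bc b n * z ^ n)
      (g' := fun n z => bc b n * ((n : ℝ) * z ^ (n - 1)))
      (fun n z _ => (hasDerivAt_pow n z).const_mul (bc b n))
      (fun n z hz => ?_) (y₀ := 0) (Set.mem_Ioo.mpr ⟨by linarith, hr0⟩)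
      (sumG hb0 hb1 (by simp)) hy
    rw [norm_mul, norm_mul, norm_pow, Real.norm_natCast]
    have hb' : ‖bc b n‖ ≤ 1 := by
      rw [Real.norm_eq_abs, abs_of_nonneg (bc_nonneg hb1 n)]; exact bc_le_one hb0 hb1 n
    have h2 : ‖z‖ ^ (n-1) ≤ r ^ (n-1) := by
      apply pow_le_pow_left₀ (norm_nonneg _)
      rw [Real.norm_eq_abs]
      exact le_of_lt (abs_lt.mpr ⟨hz.1, hz.2⟩)
    calc ‖bc b n‖ * ((n:ℝ) * ‖z‖ ^ (n-1)) ≤ 1 * ((n:ℝ) * r ^ (n-1)) := by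
          apply mul_le_mul hb' (mul_le_mul_of_nonneg_left h2 (n.cast_nonneg)) (by positivity)
          norm_num
      _ = (n:ℝ) * r ^ (n-1) := one_mul _
  -- the product with (1-z)^(1-b) has zero derivative on t
  have hzero : ∀ y ∈ t, HasDerivAt
      (fun z => (∑' n : ℕ, bc b n * z ^ n) * (1 - z) ^ (1 - b)) 0 y := by
    intro y hy
    have hy1 : y < 1 := lt_trans hy.2 hr1
    have hpos : (0:ℝ) < 1 - y := by linarith
    have d2 : HasDerivAt (fun z : ℝ => (1 - z) ^ (1 - b))
        (-1 * (1 - b) * (1 - y) ^ (1 - b - 1)) y := by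
      have hbase : HasDerivAt (fun z : ℝ => 1 - z) (-1) y := by
        simpa using (hasDerivAt_id y).const_sub 1
      exact hbase.rpow_const (Or.inl hpos.ne')
    have dall := (hder y hy).mul d2
    refine dall.congr_deriv (Eq.symm ?_)
    have e1 : (1 - y) ^ (1 - b) = (1 - y) ^ (-b) * (1 - y) := by
      rw [← Real.rpow_add_one hpos.ne' (-b)]
      ring_nf
    have e2 : (1 - y) ^ (1 - b - 1) = (1 - y) ^ (-b) := by
      norm_num
    rw [e1, e2]
    have hk := key hb0 hb1 (habs y hy)
    linear_combination (-((1 - y) ^ (-b))) * hk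
  -- constancy on [0, u]
  have hmem : ∀ x ∈ Set.Icc (0:ℝ) u, x ∈ t := by
    intro x hx
    exact Set.mem_Ioo.mpr ⟨by linarith [hx.1], by linarith [hx.2]⟩
  have hconst := constant_of_has_deriv_right_zero
    (f := fun z => (∑' n : ℕ, bc b n * z ^ n) * (1 - z) ^ (1 - b)) (a := 0) (b := u)
    (fun y hy => ((hzero y (hmem y hy)).continuousAt).continuousWithinAt)
    (fun x hx => ((hzero x (hmem x ⟨hx.1, hx.2.le⟩)).hasDerivWithinAt))
    u (Set.right_mem_Icc.mpr h0)
  change (∑' n : ℕ, bc b n * u ^ n) * (1 - u) ^ (1 - b)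
      = (∑' n : ℕ, bc b n * (0:ℝ) ^ n) * (1 - (0:ℝ)) ^ (1 - b) at hconst
  have h00 : (∑' n : ℕ, bc b n * (0:ℝ) ^ n) * (1 - (0:ℝ)) ^ (1 - b) = 1 := by
    rw [tsum_eq_single 0 (fun n hn => by simp [zero_pow hn])]
    simp [bc_zero (b := b)]
  rw [h00] at hconst
  have hpos : (0:ℝ) < 1 - u := by linarith
  have hGu : (∑' n : ℕ, bc b n * u ^ n) = (1 - u) ^ (b - 1) := by
    have := eq_inv_of_mul_eq_one_left hconst
    rw [← Real.rpow_neg hpos.le, neg_sub] at this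
    exact this
  exact (Summable.hasSum_iff (sumG hb0 hb1 (by rw [abs_of_nonneg h0]; exact h1))).mpr hGu

end bin

/-- Expanding `(1-u)^{b-1}` by the binomial series and integrating term by term:
`∫₀^v u^{a-1}(1-u)^{b-1} du = Σ_{n} ((1-b,n)/(1,n)) v^{a+n}/(a+n)`, where `(α,n)` is the
ascending Pochhammer symbol, and the series converges. -/
theorem incomplete_beta_series (a b v : ℝ) (ha : 0 < a) (hb0 : 0 < b) (hb1 : b < 1)
    (hv0 : 0 < v) (hv1 : v ≤ 1) :
    Summable (fun n : ℕ =>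
      ((ascPochhammer ℝ n).eval (1 - b) / (ascPochhammer ℝ n).eval 1) *
        v ^ (a + n) / (a + n)) ∧
    ∫ u in (0:ℝ)..v, u ^ (a - 1) * (1 - u) ^ (b - 1) =
      ∑' n : ℕ,
        ((ascPochhammer ℝ n).eval (1 - b) / (ascPochhammer ℝ n).eval 1) *
          v ^ (a + n) / (a + n) := by
  -- statement terms are `bc b n * (v ^ (a+n) / (a+n))`
  have hterm : ∀ n : ℕ,
      ((ascPochhammer ℝ n).eval (1 - b) / (ascPochhammer ℝ n).eval 1) *
        v ^ (a + n) / (a + n) = bc b n * (v ^ (a + (n:ℝ)) / (a + n)) := by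
    intro n
    rw [ascPochhammer_eval_one, bc, mul_div_assoc]
  set F : ℕ → ℝ → ℝ := fun n u => bc b n * u ^ (a + (n:ℝ) - 1) with hF
  set I : ℕ → ℝ := fun n => bc b n * (v ^ (a + (n:ℝ)) / (a + n)) with hI
  have han : ∀ n : ℕ, (0:ℝ) < a + n := fun n => by positivity
  have hInn : ∀ n, 0 ≤ I n := fun n => by
    have h1 := bc_nonneg hb1 n
    have h2 : (0:ℝ) ≤ v ^ (a + (n:ℝ)) := rpow_nonneg hv0.le _
    have := han n
    positivity
  -- pointwise: F n u ≥ 0 and sums to the integrand on Ioo 0 v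
  have hFnn : ∀ n, ∀ u ∈ Ioo (0:ℝ) v, 0 ≤ F n u := fun n u hu =>
    mul_nonneg (bc_nonneg hb1 n) (rpow_nonneg hu.1.le _)
  have hmem : ∀ u ∈ Ioo (0:ℝ) v, 0 < u ∧ u < 1 := fun u hu =>
    ⟨hu.1, lt_of_lt_of_le hu.2 hv1⟩
  have hFeq : ∀ u ∈ Ioo (0:ℝ) v, ∀ n : ℕ,
      F n u = u ^ (a - 1) * (bc b n * u ^ n) := by
    intro u hu n
    obtain ⟨hu0, hu1⟩ := hmem u hu
    show bc b n * u ^ (a + (n:ℝ) - 1) = u ^ (a - 1) * (bc b n * u ^ n)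
    have e : a + (n:ℝ) - 1 = (a - 1) + (n:ℝ) := by ring
    rw [e, Real.rpow_add hu0, ← rpow_natCast u n]
    ring
  have hsum_pt : ∀ u ∈ Ioo (0:ℝ) v,
      HasSum (fun n => F n u) (u ^ (a - 1) * (1 - u) ^ (b - 1)) := by
    intro u hu
    obtain ⟨hu0, hu1⟩ := hmem u hu
    have := (hasSum_binom hb0 hb1 hu0.le hu1).mul_left (u ^ (a - 1))
    refine this.congr_fun fun n => hFeq u hu n
  -- integrability of each term
  have hFi : ∀ n, IntegrableOn (F n) (Ioo 0 v) := by
    intro n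
    have : IntervalIntegrable (fun u : ℝ => u ^ (a + (n:ℝ) - 1)) volume 0 v :=
      intervalIntegral.intervalIntegrable_rpow' (by have := han n; linarith)
    have := this.const_mul (bc b n)
    rwa [intervalIntegrable_iff_integrableOn_Ioo_of_le hv0.le] at this
  -- value of each term integral
  have hFval : ∀ n, ∫ u in Ioo (0:ℝ) v, F n u = I n := by
    intro n
    rw [← integral_Ioc_eq_integral_Ioo, ← intervalIntegral.integral_of_le hv0.le]
    rw [hF, hI]
    simp only
    rw [intervalIntegral.integral_const_mul, integral_rpow (Or.inl (by have := han n; linarith))]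
    rw [Real.zero_rpow (by have := han n; linarith)]
    ring_nf
  -- integrability of the full integrand
  have hGint : IntegrableOn (fun u : ℝ => u ^ (a - 1) * (1 - u) ^ (b - 1)) (Ioo 0 1) := by
    have hc : IntervalIntegrable (fun x : ℝ =>
        (x : ℂ) ^ ((a:ℂ) - 1) * (1 - (x : ℂ)) ^ ((b:ℂ) - 1)) volume 0 1 :=
      Complex.betaIntegral_convergent (by simpa using ha) (by simpa using hb0)
    have hcn := hc.norm
    rw [intervalIntegrable_iff_integrableOn_Ioo_of_le zero_le_one] at hcn
    refine hcn.congr_fun ?_ measurableSet_Ioo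
    intro x hx
    obtain ⟨hx0, hx1⟩ := hx
    have h1x : (0:ℝ) < 1 - x := by linarith
    simp only [norm_mul]
    have e1 : ‖(x : ℂ) ^ ((a:ℂ) - 1)‖ = x ^ (a - 1) := by
      rw [Complex.norm_cpow_eq_rpow_re_of_pos hx0]
      simp
    have e2 : ‖(1 - (x : ℂ)) ^ ((b:ℂ) - 1)‖ = (1 - x) ^ (b - 1) := by
      have : (1 - (x : ℂ)) = ((1 - x : ℝ) : ℂ) := by push_cast; ring
      rw [this, Complex.norm_cpow_eq_rpow_re_of_pos h1x]
      simp
    rw [e1, e2]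
  have hGv : IntegrableOn (fun u : ℝ => u ^ (a - 1) * (1 - u) ^ (b - 1)) (Ioo 0 v) :=
    hGint.mono_set (Ioo_subset_Ioo le_rfl hv1)
  -- partial sums bounded by the integral
  have hpsum : ∀ N : ℕ, ∑ n ∈ Finset.range N, I n
      ≤ ∫ u in Ioo (0:ℝ) v, u ^ (a - 1) * (1 - u) ^ (b - 1) := by
    intro N
    have : ∑ n ∈ Finset.range N, I n
        = ∫ u in Ioo (0:ℝ) v, ∑ n ∈ Finset.range N, F n u := by
      rw [integral_finset_sum _ (fun n _ => hFi n)]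
      exact Finset.sum_congr rfl fun n _ => (hFval n).symm
    rw [this]
    refine setIntegral_mono_on (integrable_finset_sum _ fun n _ => hFi n) hGv
      measurableSet_Ioo ?_
    intro u hu
    obtain ⟨hu0, hu1⟩ := hmem u hu
    calc ∑ n ∈ Finset.range N, F n u
        = u ^ (a - 1) * ∑ n ∈ Finset.range N, bc b n * u ^ n := by
          rw [Finset.mul_sum]
          exact Finset.sum_congr rfl fun n _ => hFeq u hu n
      _ ≤ u ^ (a - 1) * (1 - u) ^ (b - 1) := by
          apply mul_le_mul_of_nonneg_left _ (rpow_nonneg hu0.le _)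
          exact sum_le_hasSum _ (fun n _ => mul_nonneg (bc_nonneg hb1 n) (by positivity))
            (hasSum_binom hb0 hb1 hu0.le hu1)
  have hsummable : Summable I := summable_of_sum_range_le hInn hpsum
  -- swap integral and sum
  have hswap : ∫ u in Ioo (0:ℝ) v, ∑' n : ℕ, F n u = ∑' n : ℕ, ∫ u in Ioo (0:ℝ) v, F n u := by
    refine integral_tsum (fun n => (hFi n).aestronglyMeasurable) ?_
    have hlin : ∀ n : ℕ, ∫⁻ u in Ioo (0:ℝ) v, ‖F n u‖ₑ = ENNReal.ofReal (I n) := by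
      intro n
      have hnn : 0 ≤ᵐ[volume.restrict (Ioo (0:ℝ) v)] F n :=
        (ae_restrict_mem measurableSet_Ioo).mono fun u hu => hFnn n u hu
      rw [← hFval n, ofReal_integral_eq_lintegral_ofReal (hFi n) hnn]
      refine lintegral_congr_ae (hnn.mono fun u hu => ?_)
      simp only [Pi.zero_apply] at hu
      simp only [← ofReal_norm, Real.norm_eq_abs, abs_of_nonneg hu]
    simp_rw [hlin]
    rw [← ENNReal.ofReal_tsum_of_nonneg hInn hsummable]
    exact ENNReal.ofReal_ne_top
  -- conclusion
  have hfinal : ∫ u in (0:ℝ)..v, u ^ (a - 1) * (1 - u) ^ (b - 1) = ∑' n : ℕ, I n := by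
    rw [intervalIntegral.integral_of_le hv0.le, integral_Ioc_eq_integral_Ioo]
    have : ∫ u in Ioo (0:ℝ) v, u ^ (a - 1) * (1 - u) ^ (b - 1)
        = ∫ u in Ioo (0:ℝ) v, ∑' n : ℕ, F n u := by
      refine setIntegral_congr_fun measurableSet_Ioo fun u hu => ?_
      exact ((hsum_pt u hu).tsum_eq).symm
    rw [this, hswap]
    exact tsum_congr fun n => hFval n
  constructor
  · refine hsummable.congr fun n => ?_
    exact (hterm n).symm
  · rw [hfinal]
    exact (tsum_congr fun n => (hterm n)).symm
end

section
/- Let a, b, p, q be positive real numbers with b < 1. Then the double integral of u^{a-1} (1-u)^{b-1} v^{p-1} (1-v)^{q-1} over the simplex Δ = {(u,v) : 0 ≤ u ≤ v ≤ 1} equals the convergent series Σ_{n=0}^∞ [Γ(a+p+n) Γ(q) / Γ(a+p+q+n)] · [(1-b, n) / (1, n)] · 1/(a+n). -/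
open MeasureTheory Real Polynomial
open Set Filter intervalIntegral
open scoped ENNReal

lemma betaInt_complex_real (x y : ℝ) :
    ∀ t ∈ Icc (0:ℝ) 1, (t:ℂ) ^ ((x:ℂ) - 1) * (1 - (t:ℂ)) ^ ((y:ℂ) - 1) =
      ((t ^ (x-1) * (1-t) ^ (y-1) : ℝ) : ℂ) := by
  intro t ht
  rw [show ((x:ℂ) - 1) = ((x - 1 : ℝ) : ℂ) by push_cast; ring,
    show (1 - (t:ℂ)) = ((1 - t : ℝ) : ℂ) by push_cast; ring,
    show ((y:ℂ) - 1) = ((y - 1 : ℝ) : ℂ) by push_cast; ring,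
    ← Complex.ofReal_cpow ht.1, ← Complex.ofReal_cpow (by linarith [ht.2] : (0:ℝ) ≤ 1 - t),
    Complex.ofReal_mul]

lemma betaIntegrable (x y : ℝ) (hx : 0 < x) (hy : 0 < y) :
    IntegrableOn (fun t : ℝ => t ^ (x-1) * (1-t) ^ (y-1)) (Ioc 0 1) volume := by
  have h := Complex.betaIntegral_convergent (u := x) (v := y) (by simpa using hx) (by simpa using hy)
  have h2 : IntegrableOn (fun t : ℝ =>
      ((t:ℂ) ^ ((x:ℂ) - 1) * (1 - (t:ℂ)) ^ ((y:ℂ) - 1)).re) (Ioc 0 1) volume :=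
    ((intervalIntegrable_iff_integrableOn_Ioc_of_le zero_le_one).mp h).re
  refine h2.congr_fun (fun t ht => ?_) measurableSet_Ioc
  dsimp only
  rw [betaInt_complex_real x y t ⟨ht.1.le, ht.2⟩, Complex.ofReal_re]

lemma betaVal (x y : ℝ) (hx : 0 < x) (hy : 0 < y) :
    ∫ t in (0:ℝ)..1, t ^ (x-1) * (1-t) ^ (y-1) =
      Real.Gamma x * Real.Gamma y / Real.Gamma (x+y) := by
  have h := Complex.Gamma_mul_Gamma_eq_betaIntegral (s := x) (t := y)
    (by simpa using hx) (by simpa using hy)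
  have hb : Complex.betaIntegral x y = ((∫ t in (0:ℝ)..1, t ^ (x-1) * (1-t) ^ (y-1) : ℝ) : ℂ) := by
    rw [Complex.betaIntegral, ← intervalIntegral.integral_ofReal]
    refine intervalIntegral.integral_congr (fun t ht => ?_)
    exact betaInt_complex_real x y t (by rwa [uIcc_of_le zero_le_one] at ht)
  rw [hb, ← Complex.ofReal_add, Complex.Gamma_ofReal, Complex.Gamma_ofReal,
    Complex.Gamma_ofReal, ← Complex.ofReal_mul, ← Complex.ofReal_mul] at h
  have h' := Complex.ofReal_injective h
  have hG : Real.Gamma (x + y) ≠ 0 := (Real.Gamma_pos_of_pos (by linarith)).ne'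
  field_simp [h']
  rw [h']; ring

lemma poch_succ (c : ℝ) (n : ℕ) :
    (ascPochhammer ℝ (n+1)).eval c = (ascPochhammer ℝ n).eval c * (c + n) := by
  simp [ascPochhammer_succ_right]

lemma poch_nonneg {c : ℝ} (hc : 0 ≤ c) (n : ℕ) : 0 ≤ (ascPochhammer ℝ n).eval c := by
  induction n with
  | zero => simp
  | succ n ih => rw [poch_succ]; positivity

lemma poch_le_factorial {c : ℝ} (hc0 : 0 ≤ c) (hc : c ≤ 1) (n : ℕ) :
    (ascPochhammer ℝ n).eval c ≤ n.factorial := by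
  induction n with
  | zero => simp
  | succ n ih =>
    rw [poch_succ]
    have h1 : c + n ≤ n + 1 := by linarith
    have := poch_nonneg hc0 n
    calc (ascPochhammer ℝ n).eval c * (c + n) ≤ (n.factorial : ℝ) * (n + 1) := by
          apply mul_le_mul ih h1 (by positivity) (by positivity)
      _ = (n+1).factorial := by rw [Nat.factorial_succ]; push_cast; ring

-- FTC step: derivative of t^(N+1) (1-t)^c
lemma ftc_step (c : ℝ) (N : ℕ) {u : ℝ} (hu0 : 0 ≤ u) (hu1 : u < 1) :
    ∫ t in (0:ℝ)..u, ((N+1) * t^N * (1-t) ^ (c-1) - (c+N+1) * t^(N+1) * (1-t) ^ (c-1))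
      = u^(N+1) * (1-u) ^ c := by
  have key : ∀ t ∈ uIcc (0:ℝ) u, HasDerivAt (fun t : ℝ => t^(N+1) * (1-t) ^ c)
      ((N+1) * t^N * (1-t) ^ (c-1) - (c+N+1) * t^(N+1) * (1-t) ^ (c-1)) t := by
    intro t ht
    rw [uIcc_of_le hu0] at ht
    have h1t : 0 < 1 - t := by linarith [ht.2]
    have hd1 : HasDerivAt (fun t : ℝ => t^(N+1)) ((N+1) * t^N) t := by
      simpa using (hasDerivAt_pow (N+1) t)
    have hd2 : HasDerivAt (fun t : ℝ => (1-t) ^ c) (-(c * (1-t) ^ (c-1))) t := by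
      have := (Real.hasDerivAt_rpow_const (x := 1 - t) (p := c) (Or.inl h1t.ne')).comp t
        ((hasDerivAt_id t).const_sub 1)
      simp at this; exact this
    have := hd1.mul hd2
    refine this.congr_deriv ?_
    have hrw : (1 - t) ^ c = (1-t) ^ (c-1) * (1-t) := by
      rw [← Real.rpow_add_one h1t.ne' (c-1)]; ring_nf
    rw [hrw]; ring
  have hcont : ContinuousOn (fun t : ℝ =>
      ((N+1) * t^N * (1-t) ^ (c-1) - (c+N+1) * t^(N+1) * (1-t) ^ (c-1))) (uIcc 0 u) := by
    have h1 : ContinuousOn (fun t : ℝ => (1-t) ^ (c-1)) (uIcc 0 u) := by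
      apply ContinuousOn.rpow_const (by fun_prop)
      intro t ht
      rw [uIcc_of_le hu0] at ht
      exact Or.inl (by intro h; nlinarith [ht.2] : (1:ℝ) - t ≠ 0)
    fun_prop
  rw [intervalIntegral.integral_eq_sub_of_hasDerivAt key (hcont.intervalIntegrable)]
  simp [zero_pow, Real.zero_rpow]

lemma intInt (c : ℝ) (k : ℕ) {u : ℝ} (hu0 : 0 ≤ u) (hu1 : u < 1) :
    IntervalIntegrable (fun t : ℝ => t^k * (1-t) ^ (c-1)) volume 0 u := by
  apply ContinuousOn.intervalIntegrable
  apply ContinuousOn.mul (by fun_prop)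
  apply ContinuousOn.rpow_const (by fun_prop)
  intro t ht
  rw [uIcc_of_le hu0] at ht
  exact Or.inl (by intro h; nlinarith [ht.2] : (1:ℝ) - t ≠ 0)

lemma ftc_base (c : ℝ) (hc : 0 < c) {u : ℝ} (hu0 : 0 ≤ u) (hu1 : u < 1) :
    ∫ t in (0:ℝ)..u, c * (1-t) ^ (c-1) = 1 - (1-u) ^ c := by
  have key : ∀ t ∈ uIcc (0:ℝ) u, HasDerivAt (fun t : ℝ => -((1-t) ^ c))
      (c * (1-t) ^ (c-1)) t := by
    intro t ht
    rw [uIcc_of_le hu0] at ht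
    have h1t : 0 < 1 - t := by linarith [ht.2]
    have := (Real.hasDerivAt_rpow_const (x := 1 - t) (p := c) (Or.inl h1t.ne')).comp t
      ((hasDerivAt_id t).const_sub 1)
    have h2 := this.neg; simp at h2; exact h2
  have hcont : ContinuousOn (fun t : ℝ => c * (1-t) ^ (c-1)) (uIcc 0 u) := by
    apply ContinuousOn.mul continuousOn_const
    apply ContinuousOn.rpow_const (by fun_prop)
    intro t ht
    rw [uIcc_of_le hu0] at ht
    exact Or.inl (by intro h; nlinarith [ht.2] : (1:ℝ) - t ≠ 0)
  have h := intervalIntegral.integral_eq_sub_of_hasDerivAt key hcont.intervalIntegrable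
  simp only [sub_zero, Real.one_rpow] at h
  rw [h]; ring

lemma remainder_formula (c : ℝ) (hc : 0 < c) {u : ℝ} (hu0 : 0 ≤ u) (hu1 : u < 1) (N : ℕ) :
    (1-u) ^ c * ∑ n ∈ Finset.range (N+1), (ascPochhammer ℝ n).eval c / n.factorial * u^n
      = 1 - (ascPochhammer ℝ (N+1)).eval c / N.factorial
          * ∫ t in (0:ℝ)..u, t^N * (1-t) ^ (c-1) := by
  induction N with
  | zero =>
    have hb := ftc_base c hc hu0 hu1
    rw [intervalIntegral.integral_const_mul] at hb
    have h1 : (ascPochhammer ℝ 1).eval c = c := by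
      have := poch_succ c 0; simpa using this
    simp only [zero_add, Finset.range_one, Finset.sum_singleton, pow_zero, mul_one, one_mul, h1,
      Nat.factorial_zero, Nat.cast_one, div_one, ascPochhammer_zero, Polynomial.eval_one]
    linarith [hb]
  | succ N ih =>
    have hI : ((N:ℝ)+1) * (∫ t in (0:ℝ)..u, t^N * (1-t) ^ (c-1))
        - (c+N+1) * (∫ t in (0:ℝ)..u, t^(N+1) * (1-t) ^ (c-1))
        = u^(N+1) * (1-u) ^ c := by
      rw [← intervalIntegral.integral_const_mul, ← intervalIntegral.integral_const_mul,
        ← intervalIntegral.integral_sub ((intInt c N hu0 hu1).const_mul _)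
          ((intInt c (N+1) hu0 hu1).const_mul _), ← ftc_step c N hu0 hu1]
      apply intervalIntegral.integral_congr
      intro t ht
      ring
    have hfac : (N.factorial : ℝ) ≠ 0 := by positivity
    have hN1 : ((N:ℝ)+1) ≠ 0 := by positivity
    set Pn := (ascPochhammer ℝ (N+1)).eval c with hPn
    set I0 := ∫ t in (0:ℝ)..u, t^N * (1-t) ^ (c-1) with hI0
    set I1 := ∫ t in (0:ℝ)..u, t^(N+1) * (1-t) ^ (c-1) with hI1
    have hstep : Pn/(N.factorial:ℝ) * I0 - (Pn*(c+(N:ℝ)+1))/((((N:ℝ)+1))*N.factorial) * I1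
        = Pn * u^(N+1) * (1-u) ^ c / ((((N:ℝ)+1))*N.factorial) := by
      rw [div_mul_eq_mul_div, div_mul_eq_mul_div, div_sub_div _ _ hfac (by positivity),
        div_eq_div_iff (by positivity) (by positivity)]
      linear_combination (Pn * (N.factorial:ℝ) * ((N:ℝ)+1) * (N.factorial:ℝ)) * hI
    rw [Finset.sum_range_succ, mul_add, ih]
    rw [poch_succ c (N+1), Nat.factorial_succ]
    push_cast
    linear_combination -hstep

lemma binomial_hasSum (c : ℝ) (hc0 : 0 < c) (hc1 : c ≤ 1) {u : ℝ} (hu0 : 0 ≤ u) (hu1 : u < 1) :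
    HasSum (fun n : ℕ => (ascPochhammer ℝ n).eval c / n.factorial * u^n) ((1-u) ^ (-c)) := by
  have h1u : 0 < 1 - u := by linarith
  rw [hasSum_iff_tendsto_nat_of_nonneg (fun n => by
    have := poch_nonneg hc0.le n; positivity)]
  rw [← tendsto_add_atTop_iff_nat 1]
  have hIub : ∀ N : ℕ, (∫ t in (0:ℝ)..u, t^N * (1-t) ^ (c-1))
      ≤ u^(N+1)/(N+1) * (1-u) ^ (c-1) := by
    intro N
    have hmono : ∀ t ∈ Icc (0:ℝ) u, t^N * (1-t) ^ (c-1) ≤ t^N * (1-u) ^ (c-1) := by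
      intro t ht
      have ht0 : (0:ℝ) ≤ t := ht.1
      apply mul_le_mul_of_nonneg_left _ (by positivity)
      exact Real.rpow_le_rpow_of_nonpos h1u (by linarith [ht.2]) (by linarith)
    calc (∫ t in (0:ℝ)..u, t^N * (1-t) ^ (c-1))
        ≤ ∫ t in (0:ℝ)..u, t^N * (1-u) ^ (c-1) := by
          apply intervalIntegral.integral_mono_on hu0 (intInt c N hu0 hu1)
            (((continuous_pow N).mul continuous_const).intervalIntegrable 0 u) hmono
      _ = u^(N+1)/(N+1) * (1-u) ^ (c-1) := by
          rw [intervalIntegral.integral_mul_const, integral_pow]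
          norm_num
  have hIlb : ∀ N : ℕ, 0 ≤ ∫ t in (0:ℝ)..u, t^N * (1-t) ^ (c-1) := by
    intro N
    apply intervalIntegral.integral_nonneg hu0
    intro t ht
    have ht0 : (0:ℝ) ≤ t := ht.1
    have ht1 : (0:ℝ) ≤ 1 - t := by linarith [ht.2]
    positivity
  have hR0 : Tendsto (fun N : ℕ => (ascPochhammer ℝ (N+1)).eval c / N.factorial
      * ∫ t in (0:ℝ)..u, t^N * (1-t) ^ (c-1)) atTop (nhds 0) := by
    have hgeo : Tendsto (fun N : ℕ => u^N * (u * (1-u) ^ (c-1))) atTop (nhds 0) := by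
      simpa using (tendsto_pow_atTop_nhds_zero_of_lt_one hu0 hu1).mul_const (u * (1-u) ^ (c-1))
    apply squeeze_zero
    · intro N
      have hp1 := poch_nonneg hc0.le (N+1)
      have hp2 := hIlb N
      positivity
    · intro N
      have h1 : (ascPochhammer ℝ (N+1)).eval c / N.factorial ≤ N+1 := by
        rw [div_le_iff₀ (by positivity)]
        calc (ascPochhammer ℝ (N+1)).eval c ≤ ((N+1).factorial : ℝ) :=
              poch_le_factorial hc0.le hc1 (N+1)
          _ = ((N:ℝ)+1) * N.factorial := by rw [Nat.factorial_succ]; push_cast; ring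
      calc (ascPochhammer ℝ (N+1)).eval c / N.factorial * ∫ t in (0:ℝ)..u, t^N * (1-t) ^ (c-1)
          ≤ ((N:ℝ)+1) * (u^(N+1)/(N+1) * (1-u) ^ (c-1)) := by
            apply mul_le_mul h1 (hIub N) (hIlb N) (by positivity)
        _ = u^N * (u * (1-u) ^ (c-1)) := by field_simp; ring
    · exact hgeo
  have heq : ∀ N : ℕ, ∑ n ∈ Finset.range (N+1), (ascPochhammer ℝ n).eval c / n.factorial * u^n
      = (1-u) ^ (-c) * (1 - (ascPochhammer ℝ (N+1)).eval c / N.factorial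
        * ∫ t in (0:ℝ)..u, t^N * (1-t) ^ (c-1)) := by
    intro N
    have h := remainder_formula c hc0 hu0 hu1 N
    have hne : (1-u) ^ c ≠ 0 := by positivity
    rw [Real.rpow_neg h1u.le, ← h, inv_mul_cancel_left₀ hne]
  simp only [heq]
  have : Tendsto (fun N : ℕ => (1-u) ^ (-c) * (1 - (ascPochhammer ℝ (N+1)).eval c / N.factorial
      * ∫ t in (0:ℝ)..u, t^N * (1-t) ^ (c-1))) atTop (nhds ((1-u) ^ (-c) * (1 - 0))) :=
    tendsto_const_nhds.mul (tendsto_const_nhds.sub hR0)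
  simpa using this

lemma lint_beta (x y : ℝ) (hx : 0 < x) (hy : 0 < y) :
    ∫⁻ v in Ioc (0:ℝ) 1, ENNReal.ofReal (v ^ (x-1) * (1-v) ^ (y-1)) =
      ENNReal.ofReal (Real.Gamma x * Real.Gamma y / Real.Gamma (x+y)) := by
  rw [← ofReal_integral_eq_lintegral_ofReal (betaIntegrable x y hx hy)
    ((ae_restrict_iff' measurableSet_Ioc).2 (ae_of_all _ (fun v hv => by
      have h1 : (0:ℝ) ≤ v := hv.1.le
      have h2 : (0:ℝ) ≤ 1 - v := by linarith [hv.2]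
      positivity)))]
  rw [← intervalIntegral.integral_of_le zero_le_one, betaVal x y hx hy]

lemma lint_inner (r : ℝ) (hr : 0 < r) (v : ℝ) (hv : 0 ≤ v) :
    ∫⁻ u in Ioc (0:ℝ) v, ENNReal.ofReal (u ^ (r-1)) = ENNReal.ofReal (v ^ r / r) := by
  have hint : IntegrableOn (fun u : ℝ => u ^ (r-1)) (Ioc 0 v) volume :=
    (intervalIntegrable_iff_integrableOn_Ioc_of_le hv).1
      (intervalIntegral.intervalIntegrable_rpow' (by linarith))
  rw [← ofReal_integral_eq_lintegral_ofReal hint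
    ((ae_restrict_iff' measurableSet_Ioc).2 (ae_of_all _ (fun u hu => by
      have := hu.1.le; positivity)))]
  rw [← intervalIntegral.integral_of_le hv, integral_rpow (Or.inl (by linarith))]
  rw [show r - 1 + 1 = r by ring, Real.zero_rpow hr.ne']
  norm_num

lemma slint (a p q : ℝ) (ha : 0 < a) (hp : 0 < p) (hq : 0 < q) (n : ℕ) :
    ∫⁻ w in {w : ℝ × ℝ | 0 ≤ w.1 ∧ w.1 ≤ w.2 ∧ w.2 ≤ 1},
      ENNReal.ofReal (w.1 ^ (a+(n:ℝ)-1)) * ENNReal.ofReal (w.2 ^ (p-1) * (1-w.2) ^ (q-1))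
    = ENNReal.ofReal (1/(a+(n:ℝ)) *
        (Real.Gamma (a+p+n) * Real.Gamma q / Real.Gamma (a+p+q+n))) := by
  set S : Set (ℝ × ℝ) := {w | 0 ≤ w.1 ∧ w.1 ≤ w.2 ∧ w.2 ≤ 1} with hS
  have hSm : MeasurableSet S :=
    MeasurableSet.inter (measurableSet_le measurable_const measurable_fst)
      (MeasurableSet.inter (measurableSet_le measurable_fst measurable_snd)
        (measurableSet_le measurable_snd measurable_const))
  set f : ℝ × ℝ → ℝ≥0∞ := fun w =>
    ENNReal.ofReal (w.1 ^ (a+(n:ℝ)-1)) * ENNReal.ofReal (w.2 ^ (p-1) * (1-w.2) ^ (q-1)) with hf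
  have hmeas : Measurable f := by
    refine Measurable.mul (f := fun w : ℝ × ℝ => ENNReal.ofReal (w.1 ^ (a+(n:ℝ)-1)))
      (g := fun w : ℝ × ℝ => ENNReal.ofReal (w.2 ^ (p-1) * (1-w.2) ^ (q-1))) ?_ ?_
    · exact (by fun_prop : Measurable fun w : ℝ × ℝ => w.1 ^ (a+(n:ℝ)-1)).ennreal_ofReal
    · exact (by fun_prop : Measurable fun w : ℝ × ℝ => w.2 ^ (p-1) * (1-w.2) ^ (q-1)).ennreal_ofReal
  set h : ℝ → ℝ≥0∞ := fun v =>
    ENNReal.ofReal (v ^ (a+(n:ℝ)) / (a+(n:ℝ))) * ENNReal.ofReal (v ^ (p-1) * (1-v) ^ (q-1))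
    with hh
  have han : (0:ℝ) < a + n := by positivity
  have hiv : ∀ v : ℝ, (∫⁻ u, S.indicator f (u, v)) = (Icc (0:ℝ) 1).indicator h v := by
    intro v
    by_cases hv : v ∈ Icc (0:ℝ) 1
    · have hfun : (fun u => S.indicator f (u,v)) = (Icc (0:ℝ) v).indicator
          (fun u => ENNReal.ofReal (u ^ (a+(n:ℝ)-1))
            * ENNReal.ofReal (v ^ (p-1) * (1-v) ^ (q-1))) := by
        funext u
        by_cases hu : u ∈ Icc (0:ℝ) v
        · rw [Set.indicator_of_mem hu, Set.indicator_of_mem (show (u,v) ∈ S from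
            ⟨hu.1, hu.2, hv.2⟩)]
        · rw [Set.indicator_of_notMem hu, Set.indicator_of_notMem
            (fun h' => hu ⟨h'.1, h'.2.1⟩)]
      rw [hfun, lintegral_indicator measurableSet_Icc, Set.indicator_of_mem hv,
        ← Measure.restrict_congr_set Ioc_ae_eq_Icc,
        lintegral_mul_const' _ _ ENNReal.ofReal_ne_top,
        lint_inner (a+(n:ℝ)) han v hv.1]
    · rw [Set.indicator_of_notMem hv]
      have hfun : (fun u => S.indicator f (u,v)) = fun _ => 0 := by
        funext u
        exact Set.indicator_of_notMem
          (fun h' => hv ⟨le_trans h'.1 h'.2.1, h'.2.2⟩) _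
      rw [hfun, lintegral_zero]
  calc ∫⁻ w in S, f w = ∫⁻ w, S.indicator f w := (lintegral_indicator hSm f).symm
    _ = ∫⁻ v, ∫⁻ u, S.indicator f (u, v) := by
        rw [Measure.volume_eq_prod, lintegral_prod_symm' _ (hmeas.indicator hSm)]
    _ = ∫⁻ v, (Icc (0:ℝ) 1).indicator h v := lintegral_congr hiv
    _ = ∫⁻ v in Ioc (0:ℝ) 1, h v := by
        rw [lintegral_indicator measurableSet_Icc,
          ← Measure.restrict_congr_set Ioc_ae_eq_Icc]
    _ = ∫⁻ v in Ioc (0:ℝ) 1, ENNReal.ofReal (1/(a+(n:ℝ)))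
          * ENNReal.ofReal (v ^ (a+p+(n:ℝ)-1) * (1-v) ^ (q-1)) := by
        apply setLIntegral_congr_fun measurableSet_Ioc (fun v hv => ?_)
        have hv0 : 0 < v := hv.1
        have hv1 : (0:ℝ) ≤ 1 - v := by linarith [hv.2]
        show ENNReal.ofReal (v ^ (a+(n:ℝ)) / (a+(n:ℝ)))
            * ENNReal.ofReal (v ^ (p-1) * (1-v) ^ (q-1)) = _
        rw [← ENNReal.ofReal_mul (by positivity), ← ENNReal.ofReal_mul (by positivity)]
        have hsplit : (v:ℝ)^(a+p+(n:ℝ)-1) = v^(a+(n:ℝ)) * v^(p-1) := by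
          rw [← Real.rpow_add hv0]
          congr 1
          ring
        rw [hsplit]
        congr 1
        ring
    _ = ENNReal.ofReal (1/(a+(n:ℝ)))
          * ∫⁻ v in Ioc (0:ℝ) 1, ENNReal.ofReal (v ^ (a+p+(n:ℝ)-1) * (1-v) ^ (q-1)) :=
        lintegral_const_mul' _ _ ENNReal.ofReal_ne_top
    _ = ENNReal.ofReal (1/(a+(n:ℝ))) * ENNReal.ofReal
          (Real.Gamma (a+p+n) * Real.Gamma q / Real.Gamma (a+p+q+n)) := by
        rw [lint_beta (a+p+(n:ℝ)) q (by positivity) hq,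
          show a+p+(n:ℝ)+q = a+p+q+(n:ℝ) by ring]
    _ = ENNReal.ofReal (1/(a+(n:ℝ)) *
          (Real.Gamma (a+p+n) * Real.Gamma q / Real.Gamma (a+p+q+n))) := by
        rw [← ENNReal.ofReal_mul (by positivity)]

/-- The double integral of the Beta-type density over the simplex equals the convergent
series `Σ_n B(a+p+n, q) ((1-b,n)/(1,n)) / (a+n)`, where `(α,n)` is the ascending
Pochhammer symbol and `B(x,y) = Γ(x)Γ(y)/Γ(x+y)`. -/
theorem beta_double_integral_series (a b p q : ℝ)
    (ha : 0 < a) (hb0 : 0 < b) (hb1 : b < 1) (hp : 0 < p) (hq : 0 < q) :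
    Summable (fun n : ℕ =>
      Real.Gamma (a + p + n) * Real.Gamma q / Real.Gamma (a + p + q + n) *
        ((ascPochhammer ℝ n).eval (1 - b) / (ascPochhammer ℝ n).eval 1) *
        (1 / (a + n))) ∧
    ∫ w in {w : ℝ × ℝ | 0 ≤ w.1 ∧ w.1 ≤ w.2 ∧ w.2 ≤ 1},
      w.1 ^ (a - 1) * (1 - w.1) ^ (b - 1) * w.2 ^ (p - 1) * (1 - w.2) ^ (q - 1) =
    ∑' n : ℕ,
      Real.Gamma (a + p + n) * Real.Gamma q / Real.Gamma (a + p + q + n) *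
        ((ascPochhammer ℝ n).eval (1 - b) / (ascPochhammer ℝ n).eval 1) *
        (1 / (a + n)) := by
  have hc0 : 0 < 1 - b := by linarith
  have hc1 : 1 - b ≤ 1 := by linarith
  set S : Set (ℝ × ℝ) := {w | 0 ≤ w.1 ∧ w.1 ≤ w.2 ∧ w.2 ≤ 1} with hSdef
  have hSm : MeasurableSet S :=
    MeasurableSet.inter (measurableSet_le measurable_const measurable_fst)
      (MeasurableSet.inter (measurableSet_le measurable_fst measurable_snd)
        (measurableSet_le measurable_snd measurable_const))
  set C : ℕ → ℝ := fun n => (ascPochhammer ℝ n).eval (1-b) / n.factorial with hC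
  have hCnn : ∀ n, 0 ≤ C n := fun n =>
    div_nonneg (poch_nonneg hc0.le n) (by positivity)
  set term : ℕ → ℝ := fun n =>
    Real.Gamma (a + p + n) * Real.Gamma q / Real.Gamma (a + p + q + n) *
      ((ascPochhammer ℝ n).eval (1 - b) / (ascPochhammer ℝ n).eval 1) *
      (1 / (a + n)) with hterm
  have htermnn : ∀ n, 0 ≤ term n := by
    intro n
    have h1 := Real.Gamma_pos_of_pos (show (0:ℝ) < a + p + n by positivity)
    have h2 := Real.Gamma_pos_of_pos hq
    have h3 := Real.Gamma_pos_of_pos (show (0:ℝ) < a + p + q + n by positivity)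
    have h4 := poch_nonneg hc0.le n
    have h5 : (0:ℝ) < (ascPochhammer ℝ n).eval 1 := by
      rw [ascPochhammer_eval_one]; positivity
    have h6 : (0:ℝ) < a + n := by positivity
    rw [hterm]
    positivity
  set G : ℝ × ℝ → ℝ := fun w =>
    w.1 ^ (a - 1) * (1 - w.1) ^ (b - 1) * w.2 ^ (p - 1) * (1 - w.2) ^ (q - 1) with hG
  have hGm : Measurable G := by rw [hG]; fun_prop
  set g : ℕ → ℝ × ℝ → ℝ≥0∞ := fun n w =>
    ENNReal.ofReal (C n) * (ENNReal.ofReal (w.1 ^ (a+(n:ℝ)-1)) *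
      ENNReal.ofReal (w.2 ^ (p-1) * (1-w.2) ^ (q-1))) with hg
  have hgm : ∀ n, Measurable (g n) := by
    intro n
    apply Measurable.const_mul
    exact ((by fun_prop : Measurable fun w : ℝ × ℝ => w.1 ^ (a+(n:ℝ)-1)).ennreal_ofReal.mul
      (by fun_prop : Measurable fun w : ℝ × ℝ =>
        w.2 ^ (p-1) * (1-w.2) ^ (q-1)).ennreal_ofReal)
  -- pointwise a.e. expansion
  have hae : ∀ᵐ w ∂(volume.restrict S), ENNReal.ofReal (G w) = ∑' n, g n w := by
    have hnull : (volume : Measure (ℝ × ℝ)) {w : ℝ × ℝ | w.1 = 0 ∨ w.1 = 1} = 0 := by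
      have hset : {w : ℝ × ℝ | w.1 = 0 ∨ w.1 = 1} = ({0,1} : Set ℝ) ×ˢ (univ : Set ℝ) := by
        ext w; simp [Set.mem_prod]
      rw [hset, Measure.volume_eq_prod, Measure.prod_prod,
        Set.Finite.measure_zero (by simp) volume, zero_mul]
    have h01 : ∀ᵐ w ∂(volume.restrict S), ¬(w.1 = 0 ∨ w.1 = 1) := by
      apply ae_restrict_of_ae
      rw [ae_iff]
      refine measure_mono_null (fun w hw => ?_) hnull
      exact not_not.mp hw
    filter_upwards [ae_restrict_mem hSm, h01] with w hw h01w
    push_neg at h01w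
    obtain ⟨hu0, huv, hv1⟩ := hw
    have hu0' : 0 < w.1 := lt_of_le_of_ne hu0 (Ne.symm h01w.1)
    have hu1 : w.1 < 1 := lt_of_le_of_ne (le_trans huv hv1) h01w.2
    have hvnn : 0 ≤ w.2 := le_trans hu0 huv
    have hv1' : 0 ≤ 1 - w.2 := by linarith
    have hVnn : 0 ≤ w.2 ^ (p-1) * (1-w.2) ^ (q-1) := by positivity
    have hbs := (binomial_hasSum (1-b) hc0 hc1 hu0 hu1).mul_right
      (w.1 ^ (a-1) * (w.2 ^ (p-1) * (1-w.2) ^ (q-1)))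
    have hbs3 : HasSum (fun n : ℕ => C n * w.1 ^ (a+(n:ℝ)-1) *
        (w.2 ^ (p-1) * (1-w.2) ^ (q-1))) (G w) := by
      have hfeq : (fun n : ℕ => (ascPochhammer ℝ n).eval (1-b) / n.factorial * w.1 ^ n *
          (w.1 ^ (a-1) * (w.2 ^ (p-1) * (1-w.2) ^ (q-1))))
          = fun n : ℕ => C n * w.1 ^ (a+(n:ℝ)-1) * (w.2 ^ (p-1) * (1-w.2) ^ (q-1)) := by
        funext n
        have hpow : w.1 ^ (a+(n:ℝ)-1) = w.1 ^ (a-1) * w.1 ^ (n:ℕ) := by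
          rw [← Real.rpow_natCast w.1 n, ← Real.rpow_add hu0']
          congr 1
          ring
        rw [hpow, hC]
        ring
      have hval : (1 - w.1) ^ (-(1-b)) *
          (w.1 ^ (a-1) * (w.2 ^ (p-1) * (1-w.2) ^ (q-1))) = G w := by
        rw [show -(1-b) = b-1 by ring, hG]
        ring
      rw [hfeq, hval] at hbs
      exact hbs
    rw [← hbs3.tsum_eq, ENNReal.ofReal_tsum_of_nonneg (fun n => by
      have := hCnn n
      have : (0:ℝ) ≤ w.1 ^ (a+(n:ℝ)-1) := by positivity
      have := hCnn n
      positivity) hbs3.summable]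
    apply tsum_congr
    intro n
    rw [hg]
    rw [ENNReal.ofReal_mul (mul_nonneg (hCnn n) (by positivity)),
      ENNReal.ofReal_mul (hCnn n), mul_assoc]
  -- each term
  have hterm_lint : ∀ n, ∫⁻ w in S, g n w = ENNReal.ofReal (term n) := by
    intro n
    rw [hg]
    rw [lintegral_const_mul' _ _ ENNReal.ofReal_ne_top, slint a p q ha hp hq n,
      ← ENNReal.ofReal_mul (hCnn n)]
    congr 1
    simp only [hterm, hC, ascPochhammer_eval_one]
    ring
  -- swap
  have hswap : ∫⁻ w in S, ENNReal.ofReal (G w) = ∑' n, ENNReal.ofReal (term n) := by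
    rw [lintegral_congr_ae hae, lintegral_tsum (fun n => (hgm n).aemeasurable)]
    exact tsum_congr hterm_lint
  -- finiteness
  have hfin : (∑' n, ENNReal.ofReal (term n)) ≠ ⊤ := by
    rw [← hswap]
    have hFeq : ∫⁻ w in S, ENNReal.ofReal (G w) =
        ∫⁻ w in S, ENNReal.ofReal (w.1 ^ (a-1) * (1-w.1) ^ (b-1)) *
          ENNReal.ofReal (w.2 ^ (p-1) * (1-w.2) ^ (q-1)) := by
      apply setLIntegral_congr_fun hSm (fun w hw => ?_)
      obtain ⟨hu0, huv, hv1⟩ := hw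
      have hu1 : w.1 ≤ 1 := le_trans huv hv1
      have h1 : (0:ℝ) ≤ 1 - w.1 := by linarith
      rw [← ENNReal.ofReal_mul (by positivity)]
      congr 1
      rw [hG]
      ring
    rw [hFeq]
    have hsub : S ⊆ Icc (0:ℝ) 1 ×ˢ Icc (0:ℝ) 1 := by
      intro w hw
      obtain ⟨hu0, huv, hv1⟩ := hw
      exact ⟨⟨hu0, le_trans huv hv1⟩, ⟨le_trans hu0 huv, hv1⟩⟩
    apply ne_top_of_le_ne_top ?_ (lintegral_mono' (Measure.restrict_mono hsub le_rfl) le_rfl)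
    rw [Measure.volume_eq_prod, ← Measure.prod_restrict,
      lintegral_prod_mul
        ((by fun_prop : Measurable fun u : ℝ => u ^ (a-1) * (1-u) ^ (b-1)).ennreal_ofReal.aemeasurable)
        ((by fun_prop : Measurable fun v : ℝ => v ^ (p-1) * (1-v) ^ (q-1)).ennreal_ofReal.aemeasurable)]
    rw [← Measure.restrict_congr_set Ioc_ae_eq_Icc,
      lint_beta a b ha hb0, lint_beta p q hp hq]
    exact ENNReal.mul_ne_top ENNReal.ofReal_ne_top ENNReal.ofReal_ne_top
  constructor
  · exact (ENNReal.summable_toReal hfin).congr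
      (fun n => ENNReal.toReal_ofReal (htermnn n))
  · have hGnn : 0 ≤ᵐ[volume.restrict S] G := by
      refine (ae_restrict_iff' hSm).2 (ae_of_all _ (fun w hw => ?_))
      obtain ⟨hu0, huv, hv1⟩ := hw
      have hu1 : w.1 ≤ 1 := le_trans huv hv1
      have hvnn : 0 ≤ w.2 := le_trans hu0 huv
      have h1 : (0:ℝ) ≤ 1 - w.1 := by linarith
      have h2 : (0:ℝ) ≤ 1 - w.2 := by linarith
      rw [hG]
      positivity
    rw [show (∫ w in S, w.1 ^ (a - 1) * (1 - w.1) ^ (b - 1) * w.2 ^ (p - 1) *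
        (1 - w.2) ^ (q - 1)) = ∫ w in S, G w from rfl,
      integral_eq_lintegral_of_nonneg_ae hGnn hGm.aestronglyMeasurable.restrict,
      hswap, ENNReal.tsum_toReal_eq (fun n => ENNReal.ofReal_ne_top)]
    exact tsum_congr (fun n => ENNReal.toReal_ofReal (htermnn n))
end
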